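/- Nonexistence of solutions for a totally isotropic current of full rank (the case d_J = 3): let J be a real n×3 matrix with rank(J) = 3 and Jᵀ η J = 0. Then there is no real n×3 matrix A satisfying A·(Aᵀ η A) − trace(Aᵀ η A)·A = J. -/
import Mathlib


open Matrix

/-- The pseudo-Euclidean metric matrix of signature `(p, q)`. -/
noncomputable def eta (p q : ℕ) : Matrix (Fin (p + q)) (Fin (p + q)) ℝ :=
  Matrix.diagonal fun i => if (i : ℕ) < p then 1 else -1

/-- A square real matrix of full rank has unit determinant. -/
lemma aux_isUnit_det_of_rank_eq {n : ℕ} (M : Matrix (Fin n) (Fin n) ℝ)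
    (h : M.rank = n) : IsUnit M.det := by
  by_contra hdet
  rw [isUnit_iff_ne_zero, not_not] at hdet
  obtain ⟨v, hv, hMv⟩ := (Matrix.exists_mulVec_eq_zero_iff).2 hdet
  have hker : v ∈ LinearMap.ker M.mulVecLin := by
    simpa [Matrix.mulVecLin] using hMv
  have hne : LinearMap.ker M.mulVecLin ≠ ⊥ := by
    intro hbot
    rw [hbot] at hker
    exact hv hker
  have hker_pos : 0 < Module.finrank ℝ (LinearMap.ker M.mulVecLin) := by
    rw [Module.finrank_pos_iff_exists_ne_zero]
    exact ⟨⟨v, hker⟩, fun h0 => hv (by simpa using congrArg Subtype.val h0)⟩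
  have hrn := LinearMap.finrank_range_add_finrank_ker M.mulVecLin
  have hdim : Module.finrank ℝ (Fin n → ℝ) = n := by simp
  have : M.rank + Module.finrank ℝ (LinearMap.ker M.mulVecLin) = n := by
    rw [Matrix.rank]
    rw [hrn, hdim]
  omega

/-- Nonexistence of solutions for a totally isotropic current of full rank (the case
`d_J = 3`): if `J` has rank `3` and `Jᵀ η J = 0`, then no potential `A` satisfies the
constant Yang–Mills system `A (Aᵀ η A) - trace (Aᵀ η A) • A = J`. -/
theorem yangMills_no_solution_dJ_three (p q : ℕ) (hp : 1 ≤ p) (hq : 1 ≤ q)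
    (J : Matrix (Fin (p + q)) (Fin 3) ℝ)
    (hrank : J.rank = 3) (hiso : Jᵀ * eta p q * J = 0) :
    ¬ ∃ A : Matrix (Fin (p + q)) (Fin 3) ℝ,
        A * (Aᵀ * eta p q * A) - (Aᵀ * eta p q * A).trace • A = J := by
  rintro ⟨A, hA⟩
  set S : Matrix (Fin 3) (Fin 3) ℝ := Aᵀ * eta p q * A with hS
  set M : Matrix (Fin 3) (Fin 3) ℝ := S - S.trace • 1 with hM
  -- J = A * M
  have hJ : J = A * M := by
    rw [hM, Matrix.mul_sub, Matrix.mul_smul, Matrix.mul_one, ← hA]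
  -- S and M are symmetric
  have hetaT : (eta p q)ᵀ = eta p q := Matrix.diagonal_transpose _
  have hST : Sᵀ = S := by
    rw [hS, Matrix.transpose_mul, Matrix.transpose_mul, Matrix.transpose_transpose, hetaT,
      Matrix.mul_assoc]
  have hMT : Mᵀ = M := by
    rw [hM, Matrix.transpose_sub, hST, Matrix.transpose_smul, Matrix.transpose_one]
  -- rank of M is 3, so M is invertible
  have hMrank : M.rank = 3 := by
    have h1 : J.rank ≤ M.rank := by rw [hJ]; exact Matrix.rank_mul_le_right A M
    have h2 : M.rank ≤ 3 := by
      simpa using Matrix.rank_le_card_width M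
    omega
  have hdet : IsUnit M.det := aux_isUnit_det_of_rank_eq M hMrank
  haveI := M.invertibleOfIsUnitDet hdet
  -- M * S * M = 0
  have h0 : M * S * M = 0 := by
    have : (A * M)ᵀ * eta p q * (A * M) = 0 := by rw [← hJ]; exact hiso
    rw [Matrix.transpose_mul, hMT] at this
    calc M * S * M = Mᵀ * Aᵀ * eta p q * (A * M) := by
          rw [hMT, hS]
          simp only [Matrix.mul_assoc]
      _ = 0 := by rw [hMT]; exact this
  -- hence S = 0
  have hS0 : S = 0 := by
    have : ⅟M * (M * S * M) * ⅟M = 0 := by rw [h0]; simp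
    rwa [← Matrix.mul_assoc, ← Matrix.mul_assoc, invOf_mul_self,
      one_mul, Matrix.mul_assoc, mul_invOf_self, Matrix.mul_one] at this
  -- so M = 0 and J = 0, contradicting rank J = 3
  have hM0 : M = 0 := by rw [hM, hS0]; simp
  have : J.rank = 0 := by rw [hJ, hM0, Matrix.mul_zero, Matrix.rank_zero]
  omega
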